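/- If all asylum seekers have identical burden-sizes, then the completion Ĉ'_m simultaneously satisfies substitutability, the law of aggregate demand, and the irrelevance of rejected contracts. -/

import Mathlib

/-- A contract at a fixed member state: `(asylum seeker, wait time)`.
Asylum seekers are labelled by naturals; `π a` is the priority rank of `a`
(smaller rank = higher priority); wait times are naturals. -/
abbrev Ctr := ℕ × ℕ

open Classical in
/-- Pick, from a nonempty set of contracts, the lowest-wait-time contract of the
highest-priority asylum seeker (lexicographic minimum of (rank, wait, agent)). -/
noncomputable def pick (π : ℕ → ℕ) (Z : Finset Ctr) (h : Z.Nonempty) : Ctr :=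
  let k := (Z.image fun x => toLex ((π x.1 : ℕ), toLex (x.2, x.1))).min'
    (h.image _)
  ((ofLex (ofLex k).2).2, (ofLex (ofLex k).2).1)

open Classical in
/-- One run of the greedy algorithm with fuel.  `excl = true` excludes all
contracts of already accepted asylum seekers (the rule `Ĉ_m`), `excl = false`
excludes only already accepted contracts (the completion `Ĉ'_m`). -/
noncomputable def run (s : ℕ → ℕ) (q : ℕ) (r π : ℕ → ℕ) (excl : Bool)
    (X' : Finset Ctr) : ℕ → Finset Ctr → Finset Ctr
  | 0, acc => acc
  | n+1, acc =>
    let Z : Finset Ctr := X'.filter fun x =>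
      (acc.filter fun y => y.2 = x.2).card < r x.2 ∧
      (excl = true → ∀ y ∈ acc, y.1 ≠ x.1) ∧
      (excl = false → x ∉ acc)
    if q ≤ acc.sum (fun x => s x.1) then acc
    else if h : Z.Nonempty then
      run s q r π excl X' n (insert (pick π Z h) acc)
    else acc

/-- The member state choice rule `Ĉ_m`. -/
noncomputable def Chat (s : ℕ → ℕ) (q : ℕ) (r π : ℕ → ℕ)
    (X' : Finset Ctr) : Finset Ctr :=
  run s q r π true X' (X'.card + 1) ∅

/-- The completion `Ĉ'_m` of the member state choice rule. -/
noncomputable def Chat' (s : ℕ → ℕ) (q : ℕ) (r π : ℕ → ℕ)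
    (X' : Finset Ctr) : Finset Ctr :=
  run s q r π false X' (X'.card + 1) ∅

def key (π : ℕ → ℕ) (x : Ctr) : Lex (ℕ × Lex (ℕ × ℕ)) := toLex ((π x.1 : ℕ), toLex (x.2, x.1))

def cnt (acc : Finset Ctr) (w : ℕ) : ℕ := (acc.filter fun y => y.2 = w).card

def feas (r : ℕ → ℕ) (acc : Finset Ctr) (x : Ctr) : Prop := cnt acc x.2 < r x.2 ∧ x ∉ acc

lemma pick_eq (π : ℕ → ℕ) (Z : Finset Ctr) (h : Z.Nonempty) (z : Ctr) (hz : z ∈ Z)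
    (hmin : ∀ y ∈ Z, key π z ≤ key π y) : pick π Z h = z := by
  have hm : (Z.image fun x => toLex ((π x.1 : ℕ), toLex (x.2, x.1))).min' (h.image _) = key π z := by
    apply le_antisymm
    · exact Finset.min'_le _ _ (Finset.mem_image_of_mem _ hz)
    · obtain ⟨y, hy, hyeq⟩ := Finset.mem_image.mp (Finset.min'_mem _ (h.image (key π)))
      exact le_trans (hmin y hy) (le_of_eq hyeq)
  simp only [pick, hm, key]
  rfl

section
variable {s : ℕ → ℕ} {q : ℕ} {r π : ℕ → ℕ}

lemma sum_sizes (hs : ∀ a a' : ℕ, s a = s a') (acc : Finset Ctr) :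
    acc.sum (fun x => s x.1) = s 0 * acc.card := by
  rw [Finset.sum_congr rfl (fun x _ => hs x.1 0), Finset.sum_const, smul_eq_mul, mul_comm]

lemma run_quota {X' acc : Finset Ctr} {e : Bool} {n : ℕ}
    (hq : q ≤ acc.sum (fun x => s x.1)) : run s q r π e X' n acc = acc := by
  cases n with
  | zero => rfl
  | succ n => rw [run]; simp only [if_pos hq]

lemma run_dead {X' acc : Finset Ctr} {n : ℕ}
    (hd : ∀ y ∈ X', ¬ feas r acc y) : run s q r π false X' n acc = acc := by
  cases n with
  | zero => rfl
  | succ n =>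
    rw [run]
    have hZ : (X'.filter fun x =>
        (acc.filter fun y => y.2 = x.2).card < r x.2 ∧
        ((false : Bool) = true → ∀ y ∈ acc, y.1 ≠ x.1) ∧
        ((false : Bool) = false → x ∉ acc)) = ∅ := by
      rw [Finset.filter_eq_empty_iff]
      intro y hy hc
      exact hd y hy ⟨hc.1, hc.2.2 rfl⟩
    split
    · rfl
    · rw [dif_neg (by rw [hZ]; exact Finset.not_nonempty_empty)]
end
open Classical in
noncomputable def gfold (c q : ℕ) (r : ℕ → ℕ) : List Ctr → Finset Ctr → Finset Ctr
  | [], acc => acc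
  | x :: t, acc =>
    if q ≤ c * acc.card then acc
    else if feas r acc x then gfold c q r t (insert x acc)
    else gfold c q r t acc

variable {c q : ℕ} {r : ℕ → ℕ}

lemma cnt_mono {S T : Finset Ctr} (h : S ⊆ T) (w : ℕ) : cnt S w ≤ cnt T w :=
  Finset.card_le_card (Finset.filter_subset_filter _ h)

lemma feas_antitone {S T : Finset Ctr} (h : S ⊆ T) {x : Ctr} (hf : feas r T x) : feas r S x :=
  ⟨lt_of_le_of_lt (cnt_mono h _) hf.1, fun hx => hf.2 (h hx)⟩

lemma cnt_insert {y : Ctr} {S : Finset Ctr} (hy : y ∉ S) (w : ℕ) :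
    cnt (insert y S) w = if y.2 = w then cnt S w + 1 else cnt S w := by
  unfold cnt
  rw [Finset.filter_insert]
  split
  · rw [Finset.card_insert_of_notMem (fun hc => hy (Finset.mem_filter.mp hc).1)]
  · rfl

lemma gfold_subset (L : List Ctr) (acc : Finset Ctr) : acc ⊆ gfold c q r L acc := by
  induction L generalizing acc with
  | nil => exact subset_rfl
  | cons x t ih =>
    rw [gfold]
    split
    · exact subset_rfl
    split
    · exact (Finset.subset_insert _ _).trans (ih _)
    · exact ih _

lemma gfold_subset_union (L : List Ctr) (acc : Finset Ctr) :
    gfold c q r L acc ⊆ acc ∪ L.toFinset := by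
  induction L generalizing acc with
  | nil => simp [gfold]
  | cons x t ih =>
    rw [gfold]
    split
    · exact Finset.subset_union_left
    split
    · refine (ih _).trans ?_
      intro z hz
      rcases Finset.mem_union.mp hz with h | h
      · rcases Finset.mem_insert.mp h with h | h
        · subst h; simp
        · exact Finset.mem_union_left _ h
      · simp only [List.toFinset_cons]
        exact Finset.mem_union_right _ (Finset.mem_insert_of_mem h)
    · refine (ih _).trans ?_
      intro z hz
      rcases Finset.mem_union.mp hz with h | h
      · exact Finset.mem_union_left _ h
      · simp only [List.toFinset_cons]
        exact Finset.mem_union_right _ (Finset.mem_insert_of_mem h)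

lemma gfold_quota {L : List Ctr} {acc : Finset Ctr} (h : q ≤ c * acc.card) :
    gfold c q r L acc = acc := by
  cases L with
  | nil => rfl
  | cons x t => rw [gfold, if_pos h]

lemma gfold_append (A B : List Ctr) (acc : Finset Ctr) :
    gfold c q r (A ++ B) acc = gfold c q r B (gfold c q r A acc) := by
  induction A generalizing acc with
  | nil => rfl
  | cons x t ih =>
    rw [List.cons_append, gfold, gfold]
    split
    · exact (gfold_quota (by assumption)).symm
    split
    · exact ih _
    · exact ih _

lemma gfold_card_le {k : ℕ} (hk : q ≤ c * k) (L : List Ctr) (acc : Finset Ctr) :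
    (gfold c q r L acc).card ≤ max acc.card k := by
  induction L generalizing acc with
  | nil => exact le_max_left _ _
  | cons x t ih =>
    rw [gfold]
    split
    · exact le_max_left _ _
    · rename_i hq
      have hlt : acc.card < k := by
        by_contra hc
        exact hq (hk.trans (Nat.mul_le_mul_left c (not_lt.mp hc)))
      split
      · rename_i hf
        refine (ih _).trans ?_
        rw [Finset.card_insert_of_notMem hf.2]
        omega
      · exact (ih _).trans (le_refl _)

lemma gfold_lockstep (L : List Ctr) (S T : Finset Ctr) (hnd : L.Nodup)
    (hcard : S.card = T.card) (hcnt : ∀ w, cnt S w = cnt T w)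
    (hmem : ∀ z ∈ L, z ∉ S ∧ z ∉ T) :
    ∃ D, Disjoint S D ∧ Disjoint T D ∧
      gfold c q r L S = S ∪ D ∧ gfold c q r L T = T ∪ D := by
  induction L generalizing S T with
  | nil => exact ⟨∅, Finset.disjoint_empty_right _, Finset.disjoint_empty_right _,
      (Finset.union_empty _).symm, (Finset.union_empty _).symm⟩
  | cons y t ih =>
    have hyS : y ∉ S := (hmem y (by simp)).1
    have hyT : y ∉ T := (hmem y (by simp)).2
    rw [gfold, gfold]
    by_cases hq : q ≤ c * S.card
    · rw [if_pos hq, if_pos (hcard ▸ hq)]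
      exact ⟨∅, Finset.disjoint_empty_right _, Finset.disjoint_empty_right _,
        (Finset.union_empty _).symm, (Finset.union_empty _).symm⟩
    · rw [if_neg hq, if_neg (fun h => hq (hcard ▸ h))]
      by_cases hf : feas r S y
      · have hfT : feas r T y := ⟨(hcnt y.2) ▸ hf.1, hyT⟩
        rw [if_pos hf, if_pos hfT]
        obtain ⟨D, hd1, hd2, he1, he2⟩ := ih (insert y S) (insert y T) (List.nodup_cons.mp hnd).2
          (by rw [Finset.card_insert_of_notMem hyS, Finset.card_insert_of_notMem hyT, hcard])
          (by
            intro w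
            rw [cnt_insert hyS, cnt_insert hyT, hcnt w])
          (by
            intro z hz
            have hzy : z ≠ y := fun h => (List.nodup_cons.mp hnd).1 (h ▸ hz)
            have := hmem z (List.mem_cons_of_mem _ hz)
            exact ⟨by simp [hzy, this.1], by simp [hzy, this.2]⟩)
        refine ⟨insert y D, ?_, ?_, ?_, ?_⟩
        · rw [Finset.disjoint_insert_right]
          exact ⟨hyS, Finset.disjoint_of_subset_left (Finset.subset_insert _ _) hd1⟩
        · rw [Finset.disjoint_insert_right]
          exact ⟨hyT, Finset.disjoint_of_subset_left (Finset.subset_insert _ _) hd2⟩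
        · rw [he1, Finset.insert_union, Finset.union_insert]
        · rw [he2, Finset.insert_union, Finset.union_insert]
      · have hfT : ¬ feas r T y := fun h => hf ⟨(hcnt y.2) ▸ h.1, hyS⟩
        rw [if_neg hf, if_neg hfT]
        exact ih S T (List.nodup_cons.mp hnd).2 hcard hcnt
          (fun z hz => hmem z (List.mem_cons_of_mem _ hz))


lemma gfold_sim (B : List Ctr) (x : Ctr) (S : Finset Ctr) (hnd : B.Nodup)
    (hxS : x ∉ S) (hxB : x ∉ B) (hBS : ∀ z ∈ B, z ∉ S) :
    (gfold c q r B S).card ≤ (gfold c q r B (insert x S)).card ∧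
    ∀ y ∈ gfold c q r B (insert x S), y = x ∨ y ∈ gfold c q r B S := by
  induction B generalizing S with
  | nil =>
    refine ⟨Finset.card_le_card (Finset.subset_insert _ _), fun y hy => ?_⟩
    simpa [gfold] using (Finset.mem_insert.mp hy)
  | cons y t ih =>
    have hcT : (insert x S).card = S.card + 1 := Finset.card_insert_of_notMem hxS
    have hyx : y ≠ x := fun h => hxB (h ▸ List.mem_cons_self)
    have hyS : y ∉ S := hBS y (List.mem_cons_self)
    have hyT : y ∉ insert x S := by simp [hyx, hyS]
    by_cases hqS : q ≤ c * S.card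
    · rw [gfold_quota hqS, gfold_quota
        (by rw [hcT]; exact hqS.trans (Nat.mul_le_mul_left c (Nat.le_succ _)))]
      exact ⟨Finset.card_le_card (Finset.subset_insert _ _),
        fun z hz => Finset.mem_insert.mp hz⟩
    by_cases hqT : q ≤ c * (insert x S).card
    · rw [gfold_quota hqT]
      constructor
      · refine (gfold_card_le (k := S.card + 1) (by rw [hcT] at hqT; exact hqT) _ _).trans ?_
        rw [hcT]; omega
      · intro z hz
        rcases Finset.mem_insert.mp hz with h | h
        · exact Or.inl h
        · exact Or.inr (gfold_subset _ _ h)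
    rw [gfold, gfold, if_neg hqS, if_neg hqT]
    have hndt := (List.nodup_cons.mp hnd).2
    have hxt : x ∉ t := fun h => hxB (List.mem_cons_of_mem _ h)
    have htS : ∀ z ∈ t, z ∉ S := fun z hz => hBS z (List.mem_cons_of_mem _ hz)
    by_cases hfT : feas r (insert x S) y
    · have hfS : feas r S y :=
        ⟨lt_of_le_of_lt (cnt_mono (Finset.subset_insert _ _) _) hfT.1, hyS⟩
      rw [if_pos hfS, if_pos hfT]
      rw [show insert y (insert x S) = insert x (insert y S) from Finset.insert_comm _ _ _]
      exact ih (insert y S) hndt (by simp [hyx.symm, hxS]) hxt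
        (fun z hz => by
          have hzy : z ≠ y := fun h => (List.nodup_cons.mp hnd).1 (h ▸ hz)
          simp [hzy, htS z hz])
    by_cases hfS : feas r S y
    · -- divergence: y accepted without x, rejected with x
      rw [if_pos hfS, if_neg hfT]
      have hx2 : x.2 = y.2 := by
        by_contra hne
        exact hfT ⟨by rw [cnt_insert hxS, if_neg hne]; exact hfS.1, hyT⟩
      obtain ⟨D, hd1, hd2, he1, he2⟩ := gfold_lockstep t (insert y S) (insert x S) hndt
        (by rw [Finset.card_insert_of_notMem hyS, hcT])
        (by intro w; rw [cnt_insert hyS, cnt_insert hxS, hx2])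
        (by
          intro z hz
          have hzy : z ≠ y := fun h => (List.nodup_cons.mp hnd).1 (h ▸ hz)
          have hzx : z ≠ x := fun h => hxt (h ▸ hz)
          simp [hzy, hzx, htS z hz])
      rw [he1, he2]
      constructor
      · rw [Finset.card_union_of_disjoint hd1, Finset.card_union_of_disjoint hd2,
          Finset.card_insert_of_notMem hyS, hcT]
      · intro z hz
        rcases Finset.mem_union.mp hz with h | h
        · rcases Finset.mem_insert.mp h with h | h
          · exact Or.inl h
          · exact Or.inr (Finset.mem_union_left _ (Finset.mem_insert_of_mem h))
        · exact Or.inr (Finset.mem_union_right _ h)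
    · rw [if_neg hfS, if_neg hfT]
      exact ih S hndt hxS hxt htS

lemma run_eq_gfold {s : ℕ → ℕ} {q : ℕ} {r π : ℕ → ℕ} (hs : ∀ a a' : ℕ, s a = s a')
    (X' : Finset Ctr) (L : List Ctr) :
    ∀ (n : ℕ) (acc : Finset Ctr), L.length ≤ n →
    L.Pairwise (fun a b => key π a ≤ key π b) →
    (∀ y ∈ L, y ∈ X') →
    (∀ y ∈ X', y ∉ L → ¬ feas r acc y) →
    run s q r π false X' n acc = gfold (s 0) q r L acc := by
  induction L with
  | nil =>
    intro n acc _ _ _ hdead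
    rw [run_dead (fun y hy => hdead y hy (List.not_mem_nil))]
    rfl
  | cons x t ih =>
    intro n acc hn hsort hsub hdead
    cases n with
    | zero => simp at hn
    | succ m =>
      have hq' : (q ≤ acc.sum (fun x => s x.1)) ↔ q ≤ s 0 * acc.card := by
        rw [sum_sizes hs]
      by_cases hq : q ≤ acc.sum (fun x => s x.1)
      · rw [run_quota hq, gfold_quota (hq'.mp hq)]
      by_cases hf : feas r acc x
      · rw [run]
        rw [if_neg hq]
        have hZx : x ∈ X'.filter fun x =>
            (acc.filter fun y => y.2 = x.2).card < r x.2 ∧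
            ((false : Bool) = true → ∀ y ∈ acc, y.1 ≠ x.1) ∧
            ((false : Bool) = false → x ∉ acc) := by
          refine Finset.mem_filter.mpr ⟨hsub x (List.mem_cons_self), hf.1, ?_, fun _ => hf.2⟩
          intro h; exact absurd h (by simp)
        have hne : (X'.filter fun x =>
            (acc.filter fun y => y.2 = x.2).card < r x.2 ∧
            ((false : Bool) = true → ∀ y ∈ acc, y.1 ≠ x.1) ∧
            ((false : Bool) = false → x ∉ acc)).Nonempty := ⟨x, hZx⟩
        rw [dif_pos hne]
        have hpick : pick π _ hne = x := by
          refine pick_eq _ _ _ _ hZx ?_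
          intro y hy
          obtain ⟨hyX, hy1, _, hy3⟩ := Finset.mem_filter.mp hy
          have hyf : feas r acc y := ⟨hy1, hy3 rfl⟩
          have : y ∈ x :: t := by
            by_contra hc
            exact hdead y hyX hc hyf
          rcases List.mem_cons.mp this with h | hyt
          · exact le_of_eq (by rw [h])
          · exact (List.pairwise_cons.mp hsort).1 y hyt
        rw [hpick]
        rw [gfold, if_neg (fun h => hq (hq'.mpr h)), if_pos hf]
        refine ih m (insert x acc) (Nat.succ_le_succ_iff.mp hn)
          (List.pairwise_cons.mp hsort).2
          (fun y hy => hsub y (List.mem_cons_of_mem _ hy)) ?_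
        intro y hyX hyt hyf
        by_cases hyx : y = x
        · exact hyf.2 (hyx ▸ Finset.mem_insert_self _ _)
        · exact hdead y hyX (by simp [hyx, hyt]) (feas_antitone (Finset.subset_insert _ _) hyf)
      · rw [gfold, if_neg (fun h => hq (hq'.mpr h)), if_neg hf]
        refine ih (m+1) acc (le_trans (Nat.le_succ _) hn)
          (List.pairwise_cons.mp hsort).2
          (fun y hy => hsub y (List.mem_cons_of_mem _ hy)) ?_
        intro y hyX hyt
        by_cases hyx : y = x
        · exact hyx ▸ hf
        · exact hdead y hyX (by simp [hyx, hyt])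

lemma key_inj (π : ℕ → ℕ) : Function.Injective (key π) := by
  intro a b h
  have h2 := congrArg (fun k => ofLex (ofLex k).2) h
  exact Prod.ext (congrArg Prod.snd h2) (congrArg Prod.fst h2)

open Classical in
lemma exists_sorted (π : ℕ → ℕ) (X' : Finset Ctr) :
    ∃ L : List Ctr, L.Nodup ∧ L.toFinset = X' ∧
      L.Pairwise (fun a b => key π a ≤ key π b) := by
  letI : IsTrans Ctr (fun a b => key π a ≤ key π b) := ⟨fun a b c h1 h2 => le_trans h1 h2⟩
  letI : IsAntisymm Ctr (fun a b => key π a ≤ key π b) :=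
    ⟨fun a b h1 h2 => key_inj π (le_antisymm h1 h2)⟩
  letI : IsTotal Ctr (fun a b => key π a ≤ key π b) := ⟨fun a b => le_total _ _⟩
  exact ⟨X'.sort _, X'.sort_nodup _, X'.sort_toFinset _, X'.pairwise_sort _⟩

lemma chat'_eq {s : ℕ → ℕ} {q : ℕ} {r π : ℕ → ℕ} (hs : ∀ a a' : ℕ, s a = s a')
    {X' : Finset Ctr} {L : List Ctr}
    (hnd : L.Nodup) (hfin : L.toFinset = X')
    (hsort : L.Pairwise (fun a b => key π a ≤ key π b)) :
    Chat' s q r π X' = gfold (s 0) q r L ∅ := by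
  have hlen : L.length = X'.card := by rw [← hfin, List.toFinset_card_of_nodup hnd]
  refine run_eq_gfold hs X' L (X'.card+1) ∅ (by omega) hsort ?_ ?_
  · intro y hy
    rw [← hfin]
    exact List.mem_toFinset.mpr hy
  · intro y hyX hny
    exact absurd (List.mem_toFinset.mp (by rw [hfin]; exact hyX)) hny

lemma main_lemma {s : ℕ → ℕ} {q : ℕ} {r π : ℕ → ℕ} (hs : ∀ a a' : ℕ, s a = s a')
    (Y : Finset Ctr) (x' : Ctr) (hx' : x' ∉ Y) :
    (Chat' s q r π Y).card ≤ (Chat' s q r π (insert x' Y)).card ∧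
    (∀ y ∈ Chat' s q r π (insert x' Y), y = x' ∨ y ∈ Chat' s q r π Y) ∧
    (x' ∉ Chat' s q r π (insert x' Y) → Chat' s q r π (insert x' Y) = Chat' s q r π Y) := by
  obtain ⟨M, hMnd, hMfin, hMsort⟩ := exists_sorted π (insert x' Y)
  have hx'M : x' ∈ M := by
    rw [← List.mem_toFinset, hMfin]; exact Finset.mem_insert_self _ _
  obtain ⟨A, B, rfl⟩ := List.append_of_mem hx'M
  have hsubl : (A ++ B).Sublist (A ++ x' :: B) :=
    List.Sublist.append (List.Sublist.refl _) (List.sublist_cons_self _ _)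
  have hABnd : (A ++ B).Nodup := hMnd.sublist hsubl
  have hABsort : (A ++ B).Pairwise (fun a b => key π a ≤ key π b) := hMsort.sublist hsubl
  have hx'A : x' ∉ A := fun h =>
    (List.disjoint_of_nodup_append hMnd) h (List.mem_cons_self)
  have hx'B : x' ∉ B := by
    have := (List.nodup_append.mp hMnd).2.1
    exact (List.nodup_cons.mp this).1
  have hBnd : B.Nodup := by
    have := (List.nodup_append.mp hMnd).2.1
    exact (List.nodup_cons.mp this).2
  have hABfin : (A ++ B).toFinset = Y := by
    ext z
    have hz : z ∈ (A ++ x' :: B).toFinset ↔ z ∈ insert x' Y := by rw [hMfin]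
    simp only [List.toFinset_append, List.toFinset_cons, Finset.mem_union,
      Finset.mem_insert, List.mem_toFinset] at hz ⊢
    constructor
    · intro h
      have hzx : z ≠ x' := by
        rintro rfl
        rcases h with h | h
        · exact hx'A h
        · exact hx'B h
      rcases hz.mp (by tauto) with h' | h'
      · exact absurd h' hzx
      · exact h'
    · intro h
      have hzx : z ≠ x' := fun he => hx' (he ▸ h)
      rcases hz.mpr (Or.inr h) with h' | h' | h'
      · exact Or.inl h'
      · exact absurd h' hzx
      · exact Or.inr h'
  have hC1 : Chat' s q r π Y = gfold (s 0) q r (A ++ B) ∅ :=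
    chat'_eq hs hABnd hABfin hABsort
  have hC2 : Chat' s q r π (insert x' Y) = gfold (s 0) q r (A ++ x' :: B) ∅ :=
    chat'_eq hs hMnd hMfin hMsort
  rw [hC1, hC2, gfold_append, gfold_append]
  set c := s 0 with hc
  set S0 := gfold c q r A ∅ with hS0
  have hS0A : S0 ⊆ A.toFinset := by
    refine (gfold_subset_union A ∅).trans ?_
    rw [Finset.empty_union]
  have hx'S0 : x' ∉ S0 := fun h => hx'A (List.mem_toFinset.mp (hS0A h))
  have hBS0 : ∀ z ∈ B, z ∉ S0 := by
    intro z hz h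
    exact (List.disjoint_of_nodup_append hABnd) (List.mem_toFinset.mp (hS0A h)) hz
  by_cases hq : q ≤ c * S0.card
  · rw [gfold_quota hq, gfold_quota hq]
    exact ⟨le_refl _, fun y hy => Or.inr hy, fun _ => rfl⟩
  · rw [gfold, if_neg hq]
    by_cases hf : feas r S0 x'
    · rw [if_pos hf]
      obtain ⟨hcard, hmem⟩ := gfold_sim B x' S0 hBnd hx'S0 hx'B hBS0
      refine ⟨hcard, hmem, fun hno => ?_⟩
      exact absurd (gfold_subset B (insert x' S0) (Finset.mem_insert_self _ _)) hno
    · rw [if_neg hf]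
      exact ⟨le_refl _, fun y hy => Or.inr hy, fun _ => rfl⟩

/-- with identical burden-sizes, the completion `Ĉ'_m`
simultaneously satisfies substitutability, the law of aggregate demand, and
irrelevance of rejected contracts. -/
theorem chat'_sub_lad_irc_of_homogeneous (s : ℕ → ℕ) (q : ℕ) (r π : ℕ → ℕ)
    (hπ : Function.Injective π) (hs : ∀ a a' : ℕ, s a = s a') :
    (∀ (X' : Finset Ctr) (x x' : Ctr), x ∉ X' → x' ∉ X' →
      x ∈ Chat' s q r π (insert x (insert x' X')) → x ∈ Chat' s q r π (insert x X')) ∧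
    (∀ (X' : Finset Ctr) (x : Ctr), x ∉ X' →
      (Chat' s q r π X').card ≤ (Chat' s q r π (insert x X')).card) ∧
    (∀ (X' : Finset Ctr) (x : Ctr), x ∉ X' →
      x ∉ Chat' s q r π (insert x X') → Chat' s q r π (insert x X') = Chat' s q r π X') := by
  refine ⟨?_, ?_, ?_⟩
  · intro X' x x' hx hx' hmem
    by_cases hx'Y : x' ∈ insert x X'
    · have hxx : x' = x := by
        rcases Finset.mem_insert.mp hx'Y with h | h
        · exact h
        · exact absurd h hx'
      subst hxx
      rwa [Finset.insert_idem] at hmem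
    · rw [Finset.insert_comm] at hmem
      rcases (main_lemma hs (insert x X') x' hx'Y).2.1 x hmem with h | h
      · rw [← h] at hx'Y
        exact absurd (Finset.mem_insert_self x X') hx'Y
      · exact h
  · intro X' x hx
    exact (main_lemma hs X' x hx).1
  · intro X' x hx h
    exact (main_lemma hs X' x hx).2.2 h
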